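/- Let n be a finite index type, let K : ℝ → Matrix n n ℝ be a matrix-valued function that is differentiable at ρ₀, such that K ρ is symmetric for every ρ and K ρ₀ is invertible, and let F : n → ℝ be a fixed (design-independent) load vector. Define the displacement U ρ = (K ρ)⁻¹.mulVec F and the compliance C ρ = F ⬝ᵥ U ρ. Then C is differentiable at ρ₀ and its derivative is given by the adjoint (self-adjoint) sensitivity formula deriv C ρ₀ = − (U ρ₀) ⬝ᵥ ((deriv K ρ₀).mulVec (U ρ₀)). -/

import Mathlib

open Matrix

attribute [local instance] Matrix.frobeniusNormedAddCommGroup Matrix.frobeniusNormedSpace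

attribute [local instance] Matrix.frobeniusNormedRing Matrix.frobeniusNormedAlgebra

/-- Adjoint sensitivity formula for compliance in SIMP topology optimization:
if the stiffness matrix `K ρ` is symmetric, differentiable at `ρ₀` and invertible at `ρ₀`,
and the load `F` is design-independent, then the compliance `C ρ = F ⬝ᵥ (K ρ)⁻¹.mulVec F`
is differentiable at `ρ₀` with `deriv C ρ₀ = - U ⬝ᵥ (deriv K ρ₀).mulVec U` where
`U = (K ρ₀)⁻¹.mulVec F`. -/
theorem compliance_adjoint_sensitivity
    {n : Type*} [Fintype n] [DecidableEq n]
    (K : ℝ → Matrix n n ℝ) (ρ₀ : ℝ) (F : n → ℝ)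
    (hK : DifferentiableAt ℝ K ρ₀)
    (hsymm : ∀ ρ, (K ρ).IsSymm)
    (hinv : IsUnit (K ρ₀))
    (U : ℝ → n → ℝ) (hU : U = fun ρ => ((K ρ)⁻¹).mulVec F)
    (C : ℝ → ℝ) (hC : C = fun ρ => F ⬝ᵥ U ρ) :
    DifferentiableAt ℝ C ρ₀ ∧
      deriv C ρ₀ = - (U ρ₀ ⬝ᵥ (deriv K ρ₀).mulVec (U ρ₀)) := by
  obtain ⟨u, hu⟩ := hinv
  set K' := deriv K ρ₀ with hK'
  have hKd : HasDerivAt K K' ρ₀ := hK.hasDerivAt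
  -- derivative of the (Ring) inverse
  have hinvd : HasDerivAt (fun ρ => Ring.inverse (K ρ))
      (-((K ρ₀)⁻¹ * K' * (K ρ₀)⁻¹)) ρ₀ := by
    have h1 : HasFDerivAt Ring.inverse
        (-(ContinuousLinearMap.mulLeftRight ℝ (Matrix n n ℝ) ↑u⁻¹ ↑u⁻¹)) (K ρ₀) := by
      simpa [hu] using hasFDerivAt_ringInverse (𝕜 := ℝ) u
    have h2 := h1.comp_hasDerivAt ρ₀ hKd
    have hub : (↑u⁻¹ : Matrix n n ℝ) = (K ρ₀)⁻¹ := by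
      rw [← hu, Matrix.coe_units_inv]
    simp only [hub, mul_assoc, Function.comp_def] at h2; exact h2
  have hinv' : HasDerivAt (fun ρ => (K ρ)⁻¹)
      (-((K ρ₀)⁻¹ * K' * (K ρ₀)⁻¹)) ρ₀ := by
    simpa [Matrix.nonsing_inv_eq_ringInverse] using hinvd
  -- the linear map M ↦ F ⬝ᵥ M *ᵥ F
  let L : Matrix n n ℝ →ₗ[ℝ] ℝ :=
    { toFun := fun M => F ⬝ᵥ M.mulVec F
      map_add' := by intro M N; simp [Matrix.add_mulVec, dotProduct_add]
      map_smul' := by intro c M; simp [Matrix.smul_mulVec, dotProduct_smul] }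
  have hCd : HasDerivAt C (L (-((K ρ₀)⁻¹ * K' * (K ρ₀)⁻¹))) ρ₀ := by
    have := (L.toContinuousLinearMap.hasFDerivAt.comp_hasDerivAt ρ₀ hinv')
    simp only [hC, hU, L, Function.comp_def] at this ⊢; exact this
  refine ⟨hCd.differentiableAt, ?_⟩
  rw [hCd.deriv]
  -- now compute
  have hsi : ((K ρ₀)⁻¹)ᵀ = (K ρ₀)⁻¹ := by
    rw [Matrix.transpose_nonsing_inv, (hsymm ρ₀).eq]
  have key : F ⬝ᵥ ((K ρ₀)⁻¹ * K' * (K ρ₀)⁻¹).mulVec F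
      = U ρ₀ ⬝ᵥ K'.mulVec (U ρ₀) := by
    rw [hU]
    rw [← Matrix.mulVec_mulVec, ← Matrix.mulVec_mulVec]
    rw [Matrix.dotProduct_mulVec, ← Matrix.mulVec_transpose, hsi]
  simp only [L, LinearMap.coe_mk, AddHom.coe_mk, Matrix.neg_mulVec, dotProduct_neg, key]
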